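/- Fix a universe of small groupoids. Suppose c assigns to every essentially finite groupoid 𝒢 a rational number c(𝒢) such that: (G1) c(𝟙) = 1, where 𝟙 is the groupoid with exactly one object and only its identity morphism; (G2) c(𝒢) = c(𝒢') whenever 𝒢 and 𝒢' are equivalent as categories; (G3) c(𝒢 ⊔ 𝒢') = c(𝒢) + c(𝒢'), where 𝒢 ⊔ 𝒢' is the disjoint union groupoid; (G4) c(𝒢) = n · c(𝒢') whenever n ∈ ℕ and there exists an n-fold covering 𝒢 → 𝒢'. Then c(𝒢) = ∑_{[x] ∈ π₀(𝒢)} 1/|Aut(x)| for every essentially finite groupoid 𝒢. -/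

import Mathlib

open CategoryTheory

/-- A groupoid is essentially finite if it has finitely many isomorphism classes of objects
and all automorphism groups of its objects are finite. -/
def EssentiallyFinite (G : Type) [Groupoid.{0, 0} G] : Prop :=
  Finite (Quotient (isIsomorphicSetoid G)) ∧ ∀ x : G, Finite (x ⟶ x)

/-- The groupoid cardinality `|𝒢| = ∑_{[x] ∈ π₀(𝒢)} 1 / |Aut x|` of a groupoid. -/
noncomputable def groupoidCard (G : Type) [Groupoid.{0, 0} G] : ℚ :=
  ∑ᶠ q : Quotient (isIsomorphicSetoid G),
    1 / (Nat.card (Quotient.out q ⟶ Quotient.out q) : ℚ)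

/-- A functor between groupoids is a covering if for every object `x` of the source and
every morphism `f` of the target with source `F.obj x` there is exactly one morphism `u`
of the source with source `x` such that `F` maps `u` to `f`. -/
def IsCovering {G G' : Type} [Groupoid.{0, 0} G] [Groupoid.{0, 0} G'] (F : G ⥤ G') : Prop :=
  ∀ x : G, Function.Bijective
    (fun p : Σ y : G, x ⟶ y => (⟨F.obj p.1, F.map p.2⟩ : Σ y' : G', F.obj x ⟶ y'))

/-- An `n`-fold covering is a covering such that every fibre has exactly `n` elements. -/
def IsNFoldCovering {G G' : Type} [Groupoid.{0, 0} G] [Groupoid.{0, 0} G'] (n : ℕ)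
    (F : G ⥤ G') : Prop :=
  IsCovering F ∧
    ∀ y : G', Finite {x : G // F.obj x = y} ∧ Nat.card {x : G // F.obj x = y} = n

/-- The disjoint union of two groupoids is a groupoid. -/
instance sumGroupoid (G G' : Type) [Groupoid.{0, 0} G] [Groupoid.{0, 0} G'] :
    Groupoid.{0, 0} (G ⊕ G') where
  inv {X Y} f :=
    match X, Y, f with
    | Sum.inl _, Sum.inl _, f => ULift.up (Groupoid.inv f.down)
    | Sum.inl _, Sum.inr _, f => nomatch f
    | Sum.inr _, Sum.inl _, f => nomatch f
    | Sum.inr _, Sum.inr _, f => ULift.up (Groupoid.inv f.down)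
  inv_comp {X Y} f :=
    match X, Y, f with
    | Sum.inl _, Sum.inl _, f => congrArg ULift.up (Groupoid.inv_comp f.down)
    | Sum.inl _, Sum.inr _, f => nomatch f
    | Sum.inr _, Sum.inl _, f => nomatch f
    | Sum.inr _, Sum.inr _, f => congrArg ULift.up (Groupoid.inv_comp f.down)
  comp_inv {X Y} f :=
    match X, Y, f with
    | Sum.inl _, Sum.inl _, f => congrArg ULift.up (Groupoid.comp_inv f.down)
    | Sum.inl _, Sum.inr _, f => nomatch f
    | Sum.inr _, Sum.inl _, f => nomatch f
    | Sum.inr _, Sum.inr _, f => congrArg ULift.up (Groupoid.comp_inv f.down)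

section MyAux

open CategoryTheory

variable {G G' : Type} [Groupoid.{0,0} G] [Groupoid.{0,0} G']

def MyAux.homEquiv {x y : G} (i : x ≅ y) : (x ⟶ x) ≃ (y ⟶ y) :=
  ⟨fun f => i.inv ≫ f ≫ i.hom, fun g => i.hom ≫ g ≫ i.inv,
    fun f => by simp, fun g => by simp⟩

lemma autCard_congr {x y : G} (i : x ≅ y) : Nat.card (x ⟶ x) = Nat.card (y ⟶ y) :=
  Nat.card_congr (MyAux.homEquiv i)

/-- the equivalence on iso-class quotients induced by a categorical equivalence -/
noncomputable def quotEquiv (e : G ≌ G') :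
    Quotient (isIsomorphicSetoid G) ≃ Quotient (isIsomorphicSetoid G') where
  toFun := Quotient.map e.functor.obj (fun _ _ h => h.map e.functor.mapIso)
  invFun := Quotient.map e.inverse.obj (fun _ _ h => h.map e.inverse.mapIso)
  left_inv := by
    refine Quotient.ind (fun x => ?_)
    exact Quotient.sound ⟨(e.unitIso.app x).symm⟩
  right_inv := by
    refine Quotient.ind (fun y => ?_)
    exact Quotient.sound ⟨e.counitIso.app y⟩

lemma quotEquiv_mk (e : G ≌ G') (x : G) :
    quotEquiv e ⟦x⟧ = ⟦e.functor.obj x⟧ := rfl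

noncomputable def functorHomEquiv (F : G ⥤ G') [F.Full] [F.Faithful] (x : G) :
    (x ⟶ x) ≃ (F.obj x ⟶ F.obj x) :=
  Equiv.ofBijective F.map ⟨F.map_injective, F.map_surjective⟩

lemma essFinite_of_equiv (e : G ≌ G') (h : EssentiallyFinite G') : EssentiallyFinite G := by
  haveI := h.1
  refine ⟨Finite.of_equiv _ (quotEquiv e).symm, fun x => ?_⟩
  haveI := h.2 (e.functor.obj x)
  exact Finite.of_equiv _ (functorHomEquiv e.functor x).symm

lemma out_iso_of_mk_eq {q : Quotient (isIsomorphicSetoid G)} {x : G}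
    (h : q = ⟦x⟧) : Nonempty (Quotient.out q ≅ x) := by
  have : (⟦Quotient.out q⟧ : Quotient (isIsomorphicSetoid G)) = ⟦x⟧ := by
    rw [Quotient.out_eq q, h]
  exact Quotient.exact this

lemma groupoidCard_congr (e : G ≌ G') : groupoidCard G = groupoidCard G' := by
  unfold groupoidCard
  rw [← finsum_comp_equiv (quotEquiv e).symm]
  refine finsum_congr (fun q' => ?_)
  congr 1
  -- card identification
  obtain ⟨i⟩ : Nonempty (Quotient.out ((quotEquiv e).symm q') ≅
      Quotient.out ((quotEquiv e).symm q')) := ⟨Iso.refl _⟩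
  set x := Quotient.out ((quotEquiv e).symm q') with hx
  have h1 : (⟦e.functor.obj x⟧ : Quotient (isIsomorphicSetoid G')) = q' := by
    rw [← quotEquiv_mk e x, hx, Quotient.out_eq, Equiv.apply_symm_apply]
  obtain ⟨j⟩ : Nonempty (Quotient.out q' ≅ e.functor.obj x) := out_iso_of_mk_eq h1.symm
  have h2 : Nat.card (x ⟶ x) = Nat.card (e.functor.obj x ⟶ e.functor.obj x) :=
    Nat.card_congr (functorHomEquiv e.functor x)
  rw [h2, autCard_congr j]

end MyAux

section MyAux2
open CategoryTheory

variable {G G' : Type} [Groupoid.{0,0} G] [Groupoid.{0,0} G']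

def sumInlIso {x y : G} (i : x ≅ y) : (Sum.inl x : G ⊕ G') ≅ Sum.inl y :=
  (CategoryTheory.Sum.inl_ G G').mapIso i

def sumInrIso {x y : G'} (i : x ≅ y) : (Sum.inr x : G ⊕ G') ≅ Sum.inr y :=
  (CategoryTheory.Sum.inr_ G G').mapIso i

def sumInlIsoDown {x y : G} (i : (Sum.inl x : G ⊕ G') ≅ Sum.inl y) : x ≅ y :=
  ⟨i.hom.down, i.inv.down, congrArg ULift.down i.hom_inv_id, congrArg ULift.down i.inv_hom_id⟩

def sumInrIsoDown {x y : G'} (i : (Sum.inr x : G ⊕ G') ≅ Sum.inr y) : x ≅ y :=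
  ⟨i.hom.down, i.inv.down, congrArg ULift.down i.hom_inv_id, congrArg ULift.down i.inv_hom_id⟩

def quotSumEquiv :
    Quotient (isIsomorphicSetoid (G ⊕ G')) ≃
      Quotient (isIsomorphicSetoid G) ⊕ Quotient (isIsomorphicSetoid G') where
  toFun := Quotient.lift
    (fun z => match z with
      | Sum.inl x => Sum.inl (⟦x⟧ : Quotient (isIsomorphicSetoid G))
      | Sum.inr x => Sum.inr (⟦x⟧ : Quotient (isIsomorphicSetoid G')))
    (by
      rintro (a | a) (b | b) ⟨i⟩
      · exact congrArg Sum.inl (Quotient.sound ⟨sumInlIsoDown i⟩)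
      · exact (i.hom : PEmpty).elim
      · exact (i.hom : PEmpty).elim
      · exact congrArg Sum.inr (Quotient.sound ⟨sumInrIsoDown i⟩))
  invFun := Sum.elim
    (Quotient.map Sum.inl (fun a b h => h.map sumInlIso))
    (Quotient.map Sum.inr (fun a b h => h.map sumInrIso))
  left_inv := by
    refine Quotient.ind (fun z => ?_)
    rcases z with x | x <;> rfl
  right_inv := by
    rintro (q | q) <;> induction q using Quotient.ind <;> rfl

lemma essFinite_sum (hA : EssentiallyFinite G) (hB : EssentiallyFinite G') :
    EssentiallyFinite (G ⊕ G') := by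
  haveI := hA.1; haveI := hB.1
  refine ⟨Finite.of_equiv _ quotSumEquiv.symm, fun x => ?_⟩
  rcases x with x | x
  · haveI := hA.2 x; exact Finite.of_equiv _ Equiv.ulift.symm
  · haveI := hB.2 x; exact Finite.of_equiv _ Equiv.ulift.symm

lemma groupoidCard_sum (hA : EssentiallyFinite G) (hB : EssentiallyFinite G') :
    groupoidCard (G ⊕ G') = groupoidCard G + groupoidCard G' := by
  haveI := hA.1; haveI := hB.1
  haveI := (essFinite_sum hA hB).1
  haveI : Fintype (Quotient (isIsomorphicSetoid G)) := Fintype.ofFinite _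
  haveI : Fintype (Quotient (isIsomorphicSetoid G')) := Fintype.ofFinite _
  haveI : Fintype (Quotient (isIsomorphicSetoid (G ⊕ G'))) := Fintype.ofFinite _
  unfold groupoidCard
  rw [finsum_eq_sum_of_fintype, finsum_eq_sum_of_fintype, finsum_eq_sum_of_fintype]
  rw [← Equiv.sum_comp (quotSumEquiv (G := G) (G' := G')).symm, Fintype.sum_sum_type]
  congr 1
  · refine Finset.sum_congr rfl (fun q _ => ?_)
    induction q using Quotient.ind with | _ x =>
    congr 1
    have h1 : (quotSumEquiv (G := G) (G' := G')).symm (Sum.inl ⟦x⟧) = ⟦Sum.inl x⟧ := rfl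
    obtain ⟨i⟩ := out_iso_of_mk_eq h1
    obtain ⟨j⟩ := out_iso_of_mk_eq (rfl : (⟦x⟧ : Quotient (isIsomorphicSetoid G)) = ⟦x⟧)
    rw [autCard_congr i, autCard_congr j]
    exact congrArg _ (Nat.card_congr Equiv.ulift : Nat.card ((Sum.inl x : G ⊕ G') ⟶ Sum.inl x) = Nat.card (x ⟶ x))
  · refine Finset.sum_congr rfl (fun q _ => ?_)
    induction q using Quotient.ind with | _ x =>
    congr 1
    have h1 : (quotSumEquiv (G := G) (G' := G')).symm (Sum.inr ⟦x⟧) = ⟦Sum.inr x⟧ := rfl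
    obtain ⟨i⟩ := out_iso_of_mk_eq h1
    obtain ⟨j⟩ := out_iso_of_mk_eq (rfl : (⟦x⟧ : Quotient (isIsomorphicSetoid G')) = ⟦x⟧)
    rw [autCard_congr i, autCard_congr j]
    exact congrArg _ (Nat.card_congr Equiv.ulift : Nat.card ((Sum.inr x : G ⊕ G') ⟶ Sum.inr x) = Nat.card (x ⟶ x))

end MyAux2

section MyAux3
open CategoryTheory

/-- The indiscrete groupoid on a type. -/
def Indisc (A : Type) : Type := A

/-- view an object of the indiscrete groupoid as an element of the underlying type -/
def Indisc.v {A : Type} (a : Indisc A) : A := a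

def Indisc.mk {A : Type} (a : A) : Indisc A := a

instance (A : Type) : Groupoid.{0,0} (Indisc A) where
  Hom _ _ := Unit
  id _ := ⟨⟩
  comp _ _ := ⟨⟩
  inv _ := ⟨⟩

variable (A : Type) [Group A]

/-- The covering functor from the indiscrete groupoid on `A` to `SingleObj A`. -/
def covF : Indisc A ⥤ SingleObj A where
  obj _ := SingleObj.star A
  map {a b} _ := b.v * a.v⁻¹
  map_id a := by
    show a.v * a.v⁻¹ = 𝟙 (SingleObj.star A)
    rw [SingleObj.id_as_one, mul_inv_cancel]
  map_comp {a b c} f g := by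
    rw [SingleObj.comp_as_mul]
    show c.v * a.v⁻¹ = (c.v * b.v⁻¹) * (b.v * a.v⁻¹)
    group

lemma covF_isNFold [Finite A] : IsNFoldCovering (Nat.card A) (covF A) := by
  constructor
  · intro a
    constructor
    · rintro ⟨b₁, ⟨⟩⟩ ⟨b₂, ⟨⟩⟩ h
      have h2 : b₁.v * a.v⁻¹ = b₂.v * a.v⁻¹ := by
        injection h with h1 h2
      have h3 : b₁.v = b₂.v := mul_right_cancel h2
      have h4 : b₁ = b₂ := h3
      subst h4
      rfl
    · rintro ⟨y, g⟩
      obtain ⟨⟩ := y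
      refine ⟨⟨Indisc.mk ((g : A) * a.v), ⟨⟩⟩, ?_⟩
      have : ((g : A) * a.v) * a.v⁻¹ = g := mul_inv_cancel_right _ _
      exact congrArg (fun t => (⟨SingleObj.star A, t⟩ : Σ y' : SingleObj A, _ ⟶ y')) this
  · intro y
    have e : {x : Indisc A // (covF A).obj x = y} ≃ A :=
      (Equiv.subtypeUnivEquiv (fun x => Subsingleton.elim _ _)).trans (Equiv.refl _)
    exact ⟨Finite.of_equiv _ e.symm, Nat.card_congr e⟩

lemma essFinite_singleObj [Finite A] : EssentiallyFinite (SingleObj A) := by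
  constructor
  · exact Finite.of_subsingleton
  · intro x
    exact inferInstanceAs (Finite A)

omit [Group A] in
lemma essFinite_indisc [Finite A] : EssentiallyFinite (Indisc A) := by
  constructor
  · haveI : Subsingleton (Quotient (isIsomorphicSetoid (Indisc A))) := by
      constructor
      refine Quotient.ind (fun x => Quotient.ind (fun y => ?_))
      exact Quotient.sound ⟨⟨⟨⟩, ⟨⟩, rfl, rfl⟩⟩
    exact Finite.of_subsingleton
  · intro x
    exact inferInstanceAs (Finite Unit)

/-- the functor collapsing the indiscrete groupoid -/
def indiscCollapse : Indisc A ⥤ SingleObj PUnit where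
  obj _ := SingleObj.star PUnit
  map _ := 𝟙 _
  map_id _ := rfl
  map_comp _ _ := rfl

instance : (indiscCollapse A).Faithful :=
  ⟨fun {X Y} {a b} _ => rfl⟩
instance : (indiscCollapse A).Full :=
  ⟨fun {X Y} f => ⟨⟨⟩, rfl⟩⟩
instance : (indiscCollapse A).EssSurj :=
  ⟨fun y => ⟨Indisc.mk (1 : A), ⟨eqToIso (Subsingleton.elim _ _)⟩⟩⟩
instance : (indiscCollapse A).IsEquivalence := {}

end MyAux3

section MyAux4
open CategoryTheory

variable {G : Type} [Groupoid.{0,0} G]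

/-- the functor realizing a connected groupoid as a one-object groupoid -/
def basepointFunctor (x₀ : G) : SingleObj (Aut x₀) ⥤ G where
  obj _ := x₀
  map a := a.hom
  map_id _ := rfl
  map_comp _ _ := rfl

instance (x₀ : G) : (basepointFunctor x₀).Faithful :=
  ⟨fun {X Y} {a b} h => Iso.ext h⟩

instance (x₀ : G) : (basepointFunctor x₀).Full :=
  ⟨fun {X Y} f => ⟨Groupoid.isoEquivHom x₀ x₀ |>.symm f,
    (Groupoid.isoEquivHom x₀ x₀).apply_symm_apply f⟩⟩

lemma basepoint_isEquiv (x₀ : G) (hconn : ∀ x : G, Nonempty (x ≅ x₀)) :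
    (basepointFunctor x₀).IsEquivalence := by
  haveI : (basepointFunctor x₀).EssSurj :=
    ⟨fun x => ⟨SingleObj.star _, ⟨(hconn x).some.symm⟩⟩⟩
  exact {}

lemma finite_aut (x₀ : G) (h : Finite (x₀ ⟶ x₀)) : Finite (Aut x₀) :=
  Finite.of_equiv _ (Groupoid.isoEquivHom x₀ x₀).symm

lemma card_aut (x₀ : G) : Nat.card (Aut x₀) = Nat.card (x₀ ⟶ x₀) :=
  Nat.card_congr (Groupoid.isoEquivHom x₀ x₀)

instance fullSubGroupoid (Z : G → Prop) : Groupoid.{0,0} (ObjectProperty.FullSubcategory Z) where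
  inv f := ⟨Groupoid.inv f.hom⟩
  inv_comp f := InducedCategory.hom_ext (Groupoid.inv_comp f.hom)
  comp_inv f := InducedCategory.hom_ext (Groupoid.comp_inv f.hom)

/-- lift an iso of underlying objects to the full subcategory -/
def fullSubIso {Z : G → Prop} {x y : ObjectProperty.FullSubcategory Z} (i : x.obj ≅ y.obj) : x ≅ y :=
  ⟨⟨i.hom⟩, ⟨i.inv⟩, InducedCategory.hom_ext i.hom_inv_id, InducedCategory.hom_ext i.inv_hom_id⟩

/-- the inclusion functor of a partition into a pair of complementary full subcategories -/
def partitionIncl (Z : G → Prop) :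
    (ObjectProperty.FullSubcategory Z ⊕ ObjectProperty.FullSubcategory (fun x => ¬ Z x)) ⥤ G where
  obj := Sum.elim ObjectProperty.FullSubcategory.obj ObjectProperty.FullSubcategory.obj
  map {X Y} f :=
    match X, Y, f with
    | Sum.inl _, Sum.inl _, f => f.down.hom
    | Sum.inl _, Sum.inr _, f => f.elim
    | Sum.inr _, Sum.inl _, f => f.elim
    | Sum.inr _, Sum.inr _, f => f.down.hom
  map_id X := by rcases X with X | X <;> rfl
  map_comp {X Y W} f g :=
    match X, Y, W, f, g with
    | Sum.inl _, Sum.inl _, Sum.inl _, f, g => rfl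
    | Sum.inr _, Sum.inr _, Sum.inr _, f, g => rfl

instance (Z : G → Prop) : (partitionIncl Z).Faithful := by
  constructor
  intro X Y a b h
  match X, Y, a, b with
  | Sum.inl _, Sum.inl _, a, b => exact congrArg ULift.up (InducedCategory.hom_ext h)
  | Sum.inr _, Sum.inr _, a, b => exact congrArg ULift.up (InducedCategory.hom_ext h)
  | Sum.inl _, Sum.inr _, a, b => exact a.elim
  | Sum.inr _, Sum.inl _, a, b => exact a.elim

lemma partitionIncl_full (Z : G → Prop)
    (hZ : ∀ {x y : G}, (x ≅ y) → Z x → Z y) : (partitionIncl Z).Full := by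
  constructor
  intro X Y f
  match X, Y with
  | Sum.inl x, Sum.inl y => exact ⟨⟨⟨f⟩⟩, rfl⟩
  | Sum.inr x, Sum.inr y => exact ⟨⟨⟨f⟩⟩, rfl⟩
  | Sum.inl x, Sum.inr y =>
      exact absurd (hZ ((Groupoid.isoEquivHom x.obj y.obj).symm f) x.property) y.property
  | Sum.inr x, Sum.inl y =>
      exact absurd (hZ ((Groupoid.isoEquivHom x.obj y.obj).symm f).symm y.property) x.property

lemma partitionIncl_essSurj (Z : G → Prop) : (partitionIncl Z).EssSurj := by
  constructor
  intro g
  by_cases h : Z g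
  · exact ⟨Sum.inl ⟨g, h⟩, ⟨Iso.refl g⟩⟩
  · exact ⟨Sum.inr ⟨g, h⟩, ⟨Iso.refl g⟩⟩

lemma partitionIncl_isEquiv (Z : G → Prop)
    (hZ : ∀ {x y : G}, (x ≅ y) → Z x → Z y) : (partitionIncl Z).IsEquivalence := by
  haveI := partitionIncl_full Z hZ
  haveI := partitionIncl_essSurj Z
  exact {}

end MyAux4

section MyAux5
open CategoryTheory

variable {G : Type} [Groupoid.{0,0} G]

def emptyFunctor (G G' : Type) [Groupoid.{0,0} G] [Groupoid.{0,0} G'] [IsEmpty G] :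
    G ⥤ G' where
  obj x := isEmptyElim x
  map {X Y} _ := isEmptyElim X
  map_id X := (‹IsEmpty G›.false X).elim
  map_comp {X Y Z} _ _ := (‹IsEmpty G›.false X).elim

noncomputable def isEmptyEquiv (G G' : Type) [Groupoid.{0,0} G] [Groupoid.{0,0} G']
    [IsEmpty G] [IsEmpty G'] : G ≌ G' := by
  haveI : (emptyFunctor G G').Faithful := ⟨fun {X Y} {a b} _ => (‹IsEmpty G›.false X).elim⟩
  haveI : (emptyFunctor G G').Full := ⟨fun {X Y} _ => isEmptyElim X⟩
  haveI : (emptyFunctor G G').EssSurj := ⟨fun y => isEmptyElim y⟩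
  haveI : (emptyFunctor G G').IsEquivalence := {}
  exact (emptyFunctor G G').asEquivalence

def fullSubQuotMap (Z : G → Prop) :
    Quotient (isIsomorphicSetoid (ObjectProperty.FullSubcategory Z)) → Quotient (isIsomorphicSetoid G) :=
  Quotient.map ObjectProperty.FullSubcategory.obj
    (fun _ _ h => h.map (fun i => (ObjectProperty.ι Z).mapIso i))

lemma fullSubQuotMap_inj (Z : G → Prop) : Function.Injective (fullSubQuotMap Z) := by
  refine Quotient.ind₂ (fun a b h => ?_)
  exact Quotient.sound ((Quotient.exact h).map fun i => fullSubIso i)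

lemma groupoidCard_connected (x₀ : G) (hconn : ∀ x : G, Nonempty (x ≅ x₀)) :
    groupoidCard G = 1 / (Nat.card (x₀ ⟶ x₀) : ℚ) := by
  haveI hU : Unique (Quotient (isIsomorphicSetoid G)) :=
    { default := ⟦x₀⟧, uniq := Quotient.ind fun x => Quotient.sound (hconn x) }
  unfold groupoidCard
  rw [finsum_unique]
  obtain ⟨i⟩ := out_iso_of_mk_eq ((hU.uniq ⟦x₀⟧).symm)
  rw [autCard_congr i]

lemma c_singleObj
    (c : ∀ (G : Type) [Groupoid.{0, 0} G], ℚ)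
    (hG1 : c (SingleObj PUnit) = 1)
    (hG2 : ∀ (G G' : Type) [Groupoid.{0, 0} G] [Groupoid.{0, 0} G'],
      EssentiallyFinite G → EssentiallyFinite G' → (G ≌ G') → c G = c G')
    (hG4 : ∀ (n : ℕ) (G G' : Type) [Groupoid.{0, 0} G] [Groupoid.{0, 0} G'] (F : G ⥤ G'),
      EssentiallyFinite G → EssentiallyFinite G' → IsNFoldCovering n F → c G = n * c G')
    (A : Type) [Group A] [Finite A] :
    c (SingleObj A) = 1 / (Nat.card A : ℚ) := by
  have h1 := essFinite_indisc A
  have h2 := essFinite_singleObj A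
  have h3 : EssentiallyFinite (SingleObj PUnit) := essFinite_singleObj PUnit
  have e1 := (indiscCollapse A).asEquivalence
  have hc1 : c (Indisc A) = 1 := by rw [hG2 _ _ h1 h3 e1, hG1]
  have hc2 : c (Indisc A) = (Nat.card A : ℚ) * c (SingleObj A) :=
    hG4 _ _ _ (covF A) h1 h2 (covF_isNFold A)
  rw [hc1] at hc2
  exact eq_one_div_of_mul_eq_one_right hc2.symm

lemma c_connected
    (c : ∀ (G : Type) [Groupoid.{0, 0} G], ℚ)
    (hG1 : c (SingleObj PUnit) = 1)
    (hG2 : ∀ (G G' : Type) [Groupoid.{0, 0} G] [Groupoid.{0, 0} G'],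
      EssentiallyFinite G → EssentiallyFinite G' → (G ≌ G') → c G = c G')
    (hG4 : ∀ (n : ℕ) (G G' : Type) [Groupoid.{0, 0} G] [Groupoid.{0, 0} G'] (F : G ⥤ G'),
      EssentiallyFinite G → EssentiallyFinite G' → IsNFoldCovering n F → c G = n * c G')
    (hG : EssentiallyFinite G) (x₀ : G) (hconn : ∀ x : G, Nonempty (x ≅ x₀)) :
    c G = 1 / (Nat.card (x₀ ⟶ x₀) : ℚ) := by
  haveI := finite_aut x₀ (hG.2 x₀)
  haveI := basepoint_isEquiv x₀ hconn
  have e := (basepointFunctor x₀).asEquivalence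
  have hS : EssentiallyFinite (SingleObj (Aut x₀)) := essFinite_singleObj _
  rw [← hG2 _ _ hS hG e, c_singleObj c hG1 hG2 hG4 (Aut x₀), card_aut]

end MyAux5


/-- Any assignment of rational numbers to essentially finite groupoids satisfying
(G1) normalization on the one-object one-morphism groupoid, (G2) invariance under
equivalence, (G3) additivity under disjoint union and (G4) multiplicativity under
`n`-fold coverings is given by the groupoid cardinality `∑_{[x]} 1/|Aut x|`. -/
theorem groupoidCard_unique
    (c : ∀ (G : Type) [Groupoid.{0, 0} G], ℚ)
    (hG1 : c (SingleObj PUnit) = 1)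
    (hG2 : ∀ (G G' : Type) [Groupoid.{0, 0} G] [Groupoid.{0, 0} G'],
      EssentiallyFinite G → EssentiallyFinite G' → (G ≌ G') → c G = c G')
    (hG3 : ∀ (G G' : Type) [Groupoid.{0, 0} G] [Groupoid.{0, 0} G'],
      EssentiallyFinite G → EssentiallyFinite G' → c (G ⊕ G') = c G + c G')
    (hG4 : ∀ (n : ℕ) (G G' : Type) [Groupoid.{0, 0} G] [Groupoid.{0, 0} G'] (F : G ⥤ G'),
      EssentiallyFinite G → EssentiallyFinite G' → IsNFoldCovering n F → c G = n * c G')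
    (G : Type) [Groupoid.{0, 0} G] (hG : EssentiallyFinite G) :
    c G = groupoidCard G := by
  suffices H : ∀ (n : ℕ) (G : Type) (instG : Groupoid.{0,0} G), EssentiallyFinite G →
      Nat.card (Quotient (isIsomorphicSetoid G)) = n → c G = groupoidCard G by
    exact H _ G _ hG rfl
  clear hG
  intro n
  induction n using Nat.strong_induction_on with
  | _ n ih =>
    intro G instG hG hn
    haveI := hG.1
    rcases Nat.eq_zero_or_pos n with h0 | hpos
    · -- empty case
      subst h0
      haveI : IsEmpty (Quotient (isIsomorphicSetoid G)) := by
        rcases Nat.card_eq_zero.mp hn with h | h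
        · exact h
        · exact absurd ‹Finite (Quotient (isIsomorphicSetoid G))› h.not_finite
      haveI : IsEmpty G := ⟨fun x => IsEmpty.false (⟦x⟧ : Quotient (isIsomorphicSetoid G))⟩
      have h1 : c (G ⊕ G) = c G + c G := hG3 _ _ hG hG
      have h2 : c (G ⊕ G) = c G := hG2 _ _ (essFinite_sum hG hG) hG (isEmptyEquiv _ _)
      have h3 : c G = 0 := by rw [h2] at h1; linarith
      rw [h3]
      unfold groupoidCard
      rw [finsum_of_isEmpty]
    · -- inductive step
      obtain ⟨q₀⟩ : Nonempty (Quotient (isIsomorphicSetoid G)) :=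
        (Nat.card_pos_iff.mp (hn ▸ hpos)).1
      set x₀ := q₀.out with hx₀
      set Z : G → Prop := fun x => Nonempty (x ≅ x₀) with hZ
      have hZiso : ∀ {x y : G}, (x ≅ y) → Z x → Z y :=
        fun i h => h.map (fun j => i.symm ≪≫ j)
      haveI := partitionIncl_isEquiv Z hZiso
      have e : (ObjectProperty.FullSubcategory Z ⊕ ObjectProperty.FullSubcategory (fun x => ¬ Z x)) ≌ G :=
        (partitionIncl Z).asEquivalence
      have hconn : ∀ x : ObjectProperty.FullSubcategory Z, Nonempty (x ≅ (⟨x₀, ⟨Iso.refl x₀⟩⟩ : ObjectProperty.FullSubcategory Z)) :=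
        fun x => x.property.map (fun i => fullSubIso i)
      have hC : EssentiallyFinite (ObjectProperty.FullSubcategory Z) := by
        constructor
        · haveI : Subsingleton (Quotient (isIsomorphicSetoid (ObjectProperty.FullSubcategory Z))) := by
            constructor
            refine Quotient.ind (fun x => Quotient.ind (fun y => ?_))
            refine Quotient.sound ?_
            obtain ⟨i⟩ := hconn x
            obtain ⟨j⟩ := hconn y
            exact ⟨i ≪≫ j.symm⟩
          exact Finite.of_subsingleton
        · exact (fun x => by haveI := hG.2 x.obj; exact Finite.of_equiv _ (⟨fun f => ⟨f⟩, fun f => f.hom, fun _ => rfl, fun _ => rfl⟩ : (x.obj ⟶ x.obj) ≃ (x ⟶ x)))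
      haveI : Finite (Quotient (isIsomorphicSetoid (ObjectProperty.FullSubcategory (fun x => ¬ Z x)))) :=
        Finite.of_injective _ (fullSubQuotMap_inj (fun x => ¬ Z x))
      have hR : EssentiallyFinite (ObjectProperty.FullSubcategory (fun x => ¬ Z x)) :=
        ⟨inferInstance, (fun x => by haveI := hG.2 x.obj; exact Finite.of_equiv _ (⟨fun f => ⟨f⟩, fun f => f.hom, fun _ => rfl, fun _ => rfl⟩ : (x.obj ⟶ x.obj) ≃ (x ⟶ x)))⟩
      -- cardinality bound on the remaining components
      have hmiss : ∀ q, fullSubQuotMap (fun x => ¬ Z x) q ≠ ⟦x₀⟧ :=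
        Quotient.ind (fun r h => r.property (Quotient.exact h))
      have hginj : Function.Injective
          (Sum.elim (fullSubQuotMap (fun x => ¬ Z x)) (fun _ : Unit => ⟦x₀⟧)) := by
        rintro (a | a) (b | b) h
        · exact congrArg Sum.inl (fullSubQuotMap_inj _ h)
        · exact absurd h (hmiss a)
        · exact absurd h.symm (hmiss b)
        · exact congrArg Sum.inr (Subsingleton.elim _ _)
      have hcard : Nat.card
          (Quotient (isIsomorphicSetoid (ObjectProperty.FullSubcategory (fun x => ¬ Z x)))) + 1 ≤ n := by
        have := Nat.card_le_card_of_injective _ hginj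
        rwa [Nat.card_sum, show Nat.card Unit = 1 from Nat.card_unique, hn]
          at this
      have hcR : c (ObjectProperty.FullSubcategory (fun x => ¬ Z x)) =
          groupoidCard (ObjectProperty.FullSubcategory (fun x => ¬ Z x)) :=
        ih _ (by omega) _ _ hR rfl
      have hcC : c (ObjectProperty.FullSubcategory Z) =
          1 / (Nat.card ((⟨x₀, ⟨Iso.refl x₀⟩⟩ : ObjectProperty.FullSubcategory Z) ⟶ ⟨x₀, ⟨Iso.refl x₀⟩⟩) : ℚ) :=
        c_connected c hG1 hG2 hG4 hC _ hconn
      have hgC : groupoidCard (ObjectProperty.FullSubcategory Z) =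
          1 / (Nat.card ((⟨x₀, ⟨Iso.refl x₀⟩⟩ : ObjectProperty.FullSubcategory Z) ⟶ ⟨x₀, ⟨Iso.refl x₀⟩⟩) : ℚ) :=
        groupoidCard_connected _ hconn
      have hCR : EssentiallyFinite (ObjectProperty.FullSubcategory Z ⊕ ObjectProperty.FullSubcategory (fun x => ¬ Z x)) :=
        essFinite_sum hC hR
      calc c G = c (ObjectProperty.FullSubcategory Z ⊕ ObjectProperty.FullSubcategory (fun x => ¬ Z x)) :=
            (hG2 _ _ hCR hG e).symm
        _ = c (ObjectProperty.FullSubcategory Z) + c (ObjectProperty.FullSubcategory (fun x => ¬ Z x)) := hG3 _ _ hC hR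
        _ = groupoidCard (ObjectProperty.FullSubcategory Z) +
              groupoidCard (ObjectProperty.FullSubcategory (fun x => ¬ Z x)) := by rw [hcC, hgC, hcR]
        _ = groupoidCard (ObjectProperty.FullSubcategory Z ⊕ ObjectProperty.FullSubcategory (fun x => ¬ Z x)) :=
            (groupoidCard_sum hC hR).symm
        _ = groupoidCard G := groupoidCard_congr e
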